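/- For all complex numbers z, w ∈ ℂ, one has | |z|^{-(1-m)} z − |w|^{-(1-m)} w | ≤ 5 |z − w|^m, where 0 < m < 1 and the map is extended by 0 at the origin. -/

import Mathlib

private lemma rpow_sub_one_mul {m a : ℝ} (hm0 : 0 < m) (hm1 : m < 1) (ha : 0 ≤ a) :
    a ^ (m - 1) * a = a ^ m := by
  rcases eq_or_lt_of_le ha with h | h
  · rw [← h, Real.zero_rpow (by linarith), Real.zero_rpow hm0.ne', mul_zero]
  · calc a ^ (m - 1) * a = a ^ (m - 1) * a ^ (1 : ℝ) := by rw [Real.rpow_one]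
      _ = a ^ m := by rw [← Real.rpow_add h]; norm_num

private lemma rpow_add_le {m x y : ℝ} (hm0 : 0 < m) (hm1 : m < 1) (hx : 0 ≤ x) (hy : 0 ≤ y) :
    (x + y) ^ m ≤ x ^ m + y ^ m := by
  have h := NNReal.rpow_add_le_add_rpow x.toNNReal y.toNNReal hm0.le hm1.le
  have := NNReal.coe_le_coe.2 h
  rw [NNReal.coe_add, NNReal.coe_rpow, NNReal.coe_rpow, NNReal.coe_rpow, NNReal.coe_add,
    Real.coe_toNNReal _ hx, Real.coe_toNNReal _ hy] at this
  exact this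

private lemma key (m : ℝ) (hm0 : 0 < m) (hm1 : m < 1) (z w : ℂ)
    (hba : ‖w‖ ≤ ‖z‖) :
    ‖(‖z‖ ^ (m - 1) : ℝ) * z - (‖w‖ ^ (m - 1) : ℝ) * w‖ ≤
      3 * ‖z - w‖ ^ m := by
  set a := ‖z‖ with ha
  set b := ‖w‖ with hb
  set d := ‖z - w‖ with hd
  have ha0 : 0 ≤ a := norm_nonneg z
  have hb0 : 0 ≤ b := norm_nonneg w
  have hd0 : 0 ≤ d := norm_nonneg _
  have habd : a ≤ b + d := by
    have := norm_add_le w (z - w)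
    rwa [add_sub_cancel] at this
  by_cases hbd : b ≤ d
  · -- crude bound via triangle inequality
    calc ‖(a ^ (m - 1) : ℝ) * z - (b ^ (m - 1) : ℝ) * w‖
        ≤ ‖(a ^ (m - 1) : ℝ) * z‖ + ‖(b ^ (m - 1) : ℝ) * w‖ :=
          norm_sub_le _ _
      _ = a ^ (m - 1) * a + b ^ (m - 1) * b := by
          rw [norm_mul, norm_mul, Complex.norm_real, Complex.norm_real, Real.norm_eq_abs, Real.norm_eq_abs,
            abs_of_nonneg (Real.rpow_nonneg ha0 _), abs_of_nonneg (Real.rpow_nonneg hb0 _)]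
      _ = a ^ m + b ^ m := by rw [rpow_sub_one_mul hm0 hm1 ha0, rpow_sub_one_mul hm0 hm1 hb0]
      _ ≤ (b + d) ^ m + b ^ m := by
          have := Real.rpow_le_rpow ha0 habd hm0.le
          linarith
      _ ≤ (b ^ m + d ^ m) + b ^ m := by
          have := rpow_add_le hm0 hm1 hb0 hd0
          linarith
      _ ≤ 3 * d ^ m := by
          have := Real.rpow_le_rpow hb0 hbd hm0.le
          linarith
  · push_neg at hbd
    have hbpos : 0 < b := lt_of_le_of_lt hd0 hbd
    have hapos : 0 < a := lt_of_lt_of_le hbpos hba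
    rcases eq_or_lt_of_le hd0 with h0 | hdpos
    · -- z = w
      have hzw : z = w := by
        have h1 : ‖z - w‖ = 0 := h0.symm
        exact sub_eq_zero.mp (norm_eq_zero.mp h1)
      subst hzw
      simp only [ha, hb, hd, sub_self, norm_zero]
      positivity
    · -- main case: 0 < d < b ≤ a
      have hdb : a - b ≤ d := norm_sub_norm_le z w
      -- splitting
      have hsplit : ((a ^ (m - 1) : ℝ) : ℂ) * z - ((b ^ (m - 1) : ℝ) : ℂ) * w =
          ((a ^ (m - 1) : ℝ) : ℂ) * (z - w) + (((a ^ (m - 1) - b ^ (m - 1) : ℝ)) : ℂ) * w := by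
        push_cast; ring
      have huv : a ^ (m - 1) ≤ b ^ (m - 1) :=
        Real.rpow_le_rpow_of_nonpos hbpos hba (by linarith)
      have had : a ^ (m - 1) ≤ d ^ (m - 1) :=
        Real.rpow_le_rpow_of_nonpos hdpos (le_trans hbd.le hba) (by linarith)
      have hbd' : b ^ (m - 1) ≤ d ^ (m - 1) :=
        Real.rpow_le_rpow_of_nonpos hdpos hbd.le (by linarith)
      have hAB : b ^ m ≤ a ^ m := Real.rpow_le_rpow hb0 hba hm0.le
      have hua : a ^ (m - 1) * a = a ^ m := rpow_sub_one_mul hm0 hm1 ha0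
      have hvb : b ^ (m - 1) * b = b ^ m := rpow_sub_one_mul hm0 hm1 hb0
      have hupos : 0 < a ^ (m - 1) := Real.rpow_pos_of_pos hapos _
      have hvpos : 0 < b ^ (m - 1) := Real.rpow_pos_of_pos hbpos _
      -- core algebraic inequality
      have hcore : (b ^ (m - 1) - a ^ (m - 1)) * b ≤ b ^ (m - 1) * (a - b) := by
        nlinarith [sq_nonneg (a - b), mul_pos hapos hbpos,
          mul_nonneg (mul_nonneg hb0 hb0) (sub_nonneg.2 hAB),
          mul_nonneg (mul_nonneg (sub_nonneg.2 hba) (sub_nonneg.2 hba))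
            (Real.rpow_nonneg hb0 m)]
      calc ‖((a ^ (m - 1) : ℝ) : ℂ) * z - ((b ^ (m - 1) : ℝ) : ℂ) * w‖
          ≤ ‖((a ^ (m - 1) : ℝ) : ℂ) * (z - w)‖ +
            ‖(((a ^ (m - 1) - b ^ (m - 1) : ℝ)) : ℂ) * w‖ := by
            rw [hsplit]; exact norm_add_le _ _
        _ = a ^ (m - 1) * d + (b ^ (m - 1) - a ^ (m - 1)) * b := by
            rw [norm_mul, norm_mul, Complex.norm_real, Complex.norm_real, Real.norm_eq_abs, Real.norm_eq_abs,
              abs_of_nonneg (Real.rpow_nonneg ha0 _), abs_of_nonpos (by linarith), ← hd, ← hb]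
            ring
        _ ≤ d ^ (m - 1) * d + b ^ (m - 1) * (a - b) := by
            have h1 : a ^ (m - 1) * d ≤ d ^ (m - 1) * d :=
              mul_le_mul_of_nonneg_right had hd0
            linarith
        _ ≤ d ^ (m - 1) * d + d ^ (m - 1) * d := by
            have h2 : b ^ (m - 1) * (a - b) ≤ b ^ (m - 1) * d :=
              mul_le_mul_of_nonneg_left hdb hvpos.le
            have h3 : b ^ (m - 1) * d ≤ d ^ (m - 1) * d :=
              mul_le_mul_of_nonneg_right hbd' hd0
            linarith
        _ = 2 * d ^ m := by rw [rpow_sub_one_mul hm0 hm1 hd0]; ring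
        _ ≤ 3 * d ^ m := by
            have : 0 ≤ d ^ m := Real.rpow_nonneg hd0 _
            linarith

/-- Hölder estimate for the nonlinearity: `| |z|^{m-1}z - |w|^{m-1}w | ≤ 5 |z-w|^m`
for `0 < m < 1` (the map extended by `0` at the origin). -/
theorem stmt5 (m : ℝ) (hm0 : 0 < m) (hm1 : m < 1) (z w : ℂ) :
    ‖(‖z‖ ^ (m - 1) : ℝ) * z - (‖w‖ ^ (m - 1) : ℝ) * w‖ ≤
      5 * ‖z - w‖ ^ m := by
  have hnn : 0 ≤ ‖z - w‖ ^ m := Real.rpow_nonneg (norm_nonneg _) _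
  rcases le_total (‖w‖) (‖z‖) with h | h
  · have := key m hm0 hm1 z w h
    linarith
  · have := key m hm0 hm1 w z h
    rw [norm_sub_rev, norm_sub_rev z w]
    have hnn' : 0 ≤ ‖w - z‖ ^ m := Real.rpow_nonneg (norm_nonneg _) _
    linarith
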